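/- Let p be a prime, A ∈ ℤ^{n×n} a non-singular p-characterized matrix, and m > v_p(det A) an integer. Then Ā = A rem p^m (entrywise remainder on division by p^m) is also p-characterized. -/

import Mathlib

open Matrix Polynomial

/-- The `k`-th determinantal divisor of an integer matrix: the GCD of all
`k × k` minors. -/
noncomputable def detDiv {n : ℕ} (A : Matrix (Fin n) (Fin n) ℤ) (k : ℕ) : ℤ :=
  Finset.univ.gcd (fun στ : (Fin k → Fin n) × (Fin k → Fin n) =>
    (A.submatrix στ.1 στ.2).det)

/-- `A` is `p`-characterized: for each `i ∈ [1, r]` (where `r = rank A`; for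
non-singular `A` this is `r = n`), the `p`-adic valuation of the coefficient
`f_i` of `x^(n-i)` in the characteristic polynomial of `A` equals the `p`-adic
valuation of the `i`-th determinantal divisor `Δ_i` of `A`.  Equality of
valuations is expressed via divisibility by all powers of `p`. -/
def PCharacterized {n : ℕ} (p : ℕ) (A : Matrix (Fin n) (Fin n) ℤ) : Prop :=
  ∀ i : ℕ, 1 ≤ i → i ≤ A.rank →
    ∀ k : ℕ, ((p : ℤ) ^ k ∣ A.charpoly.coeff (n - i) ↔ (p : ℤ) ^ k ∣ detDiv A i)

/-- Rank of a non-singular integer matrix is `n`. -/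
lemma rank_of_det_ne_zero' {n : ℕ} (A : Matrix (Fin n) (Fin n) ℤ) (hA : A.det ≠ 0) :
    A.rank = n := by
  have hinj : Function.Injective A.mulVecLin := by
    rw [← LinearMap.ker_eq_bot, LinearMap.ker_eq_bot']
    intro v hv
    exact Matrix.eq_zero_of_mulVec_eq_zero hA hv
  rw [Matrix.rank, LinearMap.finrank_range_of_inj hinj]
  simp

lemma cast_map_mod' (N : ℕ) (x : ℤ) : ((x % (N : ℤ) : ℤ) : ZMod N) = (x : ZMod N) := by
  rw [ZMod.intCast_eq_intCast_iff]
  exact Int.emod_emod_of_dvd x dvd_rfl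

lemma map_mod_cast_eq' {k : ℕ} (N : ℕ) (M : Matrix (Fin k) (Fin k) ℤ) :
    (M.map (fun x => x % (N : ℤ))).map (Int.cast : ℤ → ZMod N) = M.map Int.cast := by
  ext i j
  simp [Matrix.map_apply, cast_map_mod']

lemma dvd_det_sub' {k : ℕ} (N : ℕ) (M : Matrix (Fin k) (Fin k) ℤ) :
    (N : ℤ) ∣ (M.map (fun x => x % (N : ℤ))).det - M.det := by
  have h : (((M.map (fun x => x % (N : ℤ))).det : ℤ) : ZMod N) = (M.det : ZMod N) := by
    have h0 := congrArg Matrix.det (map_mod_cast_eq' N M)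
    rwa [show (Int.cast : ℤ → ZMod N) = ⇑(Int.castRingHom (ZMod N)) from rfl,
      ← RingHom.mapMatrix_apply, ← RingHom.mapMatrix_apply,
      ← RingHom.map_det, ← RingHom.map_det] at h0
  rw [ZMod.intCast_eq_intCast_iff] at h
  exact h.symm.dvd

lemma dvd_charpoly_coeff_sub' {k : ℕ} (N : ℕ) (M : Matrix (Fin k) (Fin k) ℤ) (j : ℕ) :
    (N : ℤ) ∣ (M.map (fun x => x % (N : ℤ))).charpoly.coeff j - M.charpoly.coeff j := by
  have h : ((M.map (fun x => x % (N : ℤ))).map (Int.castRingHom (ZMod N))).charpoly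
      = (M.map (Int.castRingHom (ZMod N))).charpoly := by
    congr 1
    exact map_mod_cast_eq' N M
  rw [Matrix.charpoly_map, Matrix.charpoly_map] at h
  have h2 := congrArg (fun P => P.coeff j) h
  simp only [Polynomial.coeff_map] at h2
  have h3 : (((M.map (fun x => x % (N : ℤ))).charpoly.coeff j : ℤ) : ZMod N)
      = ((M.charpoly.coeff j : ℤ) : ZMod N) := h2
  rw [ZMod.intCast_eq_intCast_iff] at h3
  exact (Int.ModEq.symm h3).dvd

lemma dvd_iff_of_sub' {p m : ℕ} {a b : ℤ} (hsub : (p : ℤ) ^ m ∣ b - a)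
    (ha : ¬ (p : ℤ) ^ m ∣ a) (k : ℕ) : (p : ℤ) ^ k ∣ b ↔ (p : ℤ) ^ k ∣ a := by
  rcases le_or_gt k m with h | h
  · have hd : (p : ℤ) ^ k ∣ b - a := dvd_trans (pow_dvd_pow _ h) hsub
    constructor
    · intro hb
      have := dvd_sub hb hd
      simpa using this
    · intro haa
      have := dvd_add haa hd
      simpa [add_sub_cancel] using this
  · constructor
    · intro hb
      exfalso
      apply ha
      have hbm : (p : ℤ) ^ m ∣ b := dvd_trans (pow_dvd_pow _ h.le) hb
      have := dvd_sub hbm hsub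
      simpa using this
    · intro haa
      exact absurd (dvd_trans (pow_dvd_pow _ h.le) haa) ha

lemma detDiv_dvd_succ' {n : ℕ} (A : Matrix (Fin n) (Fin n) ℤ) (k : ℕ) :
    detDiv A k ∣ detDiv A (k + 1) := by
  apply Finset.dvd_gcd
  intro στ _
  rw [Matrix.det_succ_row_zero]
  apply Finset.dvd_sum
  intro j _
  apply Dvd.dvd.mul_left
  rw [Matrix.submatrix_submatrix]
  exact Finset.gcd_dvd (Finset.mem_univ (στ.1 ∘ Fin.succ, στ.2 ∘ j.succAbove))

lemma detDiv_dvd_det' {n : ℕ} (A : Matrix (Fin n) (Fin n) ℤ) {i : ℕ} (hi : i ≤ n) :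
    detDiv A i ∣ A.det := by
  have hstep : ∀ j, i ≤ j → j ≤ n → detDiv A i ∣ detDiv A j := by
    intro j hij
    induction j, hij using Nat.le_induction with
    | base => intro _; exact dvd_rfl
    | succ j hij ih =>
      intro hjn
      exact (ih (by omega)).trans (detDiv_dvd_succ' A j)
  have h1 : detDiv A i ∣ detDiv A n := hstep n hi le_rfl
  have h2 : detDiv A n ∣ A.det := by
    have := Finset.gcd_dvd (Finset.mem_univ ((id : Fin n → Fin n), (id : Fin n → Fin n)))
      (f := fun στ : (Fin n → Fin n) × (Fin n → Fin n) => (A.submatrix στ.1 στ.2).det)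
    simpa [detDiv] using this
  exact h1.trans h2

/-- If `A ∈ ℤ^{n×n}` is non-singular and `p`-characterized,
and `m > v_p(det A)`, then `Ā = A rem p^m` (entrywise remainder on division by
`p^m`) is also `p`-characterized. -/
theorem rem_pCharacterized (n p : ℕ) (hp : p.Prime)
    (A : Matrix (Fin n) (Fin n) ℤ) (hA : A.det ≠ 0)
    (hchar : PCharacterized p A)
    (m : ℕ) (hm : padicValInt p A.det < m) :
    PCharacterized p (A.map (fun x => x % (p : ℤ) ^ m)) := by
  haveI : Fact p.Prime := ⟨hp⟩
  have hN : ((p ^ m : ℕ) : ℤ) = (p : ℤ) ^ m := by push_cast; ring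
  set B := A.map (fun x => x % (p : ℤ) ^ m) with hB
  have hBeq : B = A.map (fun x => x % ((p ^ m : ℕ) : ℤ)) := by rw [hN]
  intro i hi1 hi2 k
  have hrankA : A.rank = n := rank_of_det_ne_zero' A hA
  have hin : i ≤ n := le_trans hi2 (le_trans (Matrix.rank_le_card_width _) (by simp))
  have hiA : i ≤ A.rank := by rw [hrankA]; exact hin
  -- p^m does not divide det A
  have hpm_det : ¬ (p : ℤ) ^ m ∣ A.det := by
    intro h
    rcases (padicValInt_dvd_iff m A.det).mp h with h0 | hle
    · exact hA h0
    · omega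
  have hΔ : ¬ (p : ℤ) ^ m ∣ detDiv A i :=
    fun h => hpm_det (h.trans (detDiv_dvd_det' A hin))
  have hf : ¬ (p : ℤ) ^ m ∣ A.charpoly.coeff (n - i) :=
    fun h => hΔ ((hchar i hi1 hiA m).mp h)
  -- charpoly coefficient congruence
  have hc : (p : ℤ) ^ m ∣ B.charpoly.coeff (n - i) - A.charpoly.coeff (n - i) := by
    rw [hBeq, ← hN]
    exact dvd_charpoly_coeff_sub' (p ^ m) A (n - i)
  have h1 : (p : ℤ) ^ k ∣ B.charpoly.coeff (n - i) ↔ (p : ℤ) ^ k ∣ A.charpoly.coeff (n - i) :=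
    dvd_iff_of_sub' hc hf k
  -- minor congruence
  have key : ∀ στ : (Fin i → Fin n) × (Fin i → Fin n),
      (p : ℤ) ^ m ∣ (B.submatrix στ.1 στ.2).det - (A.submatrix στ.1 στ.2).det := by
    intro στ
    have hsub : B.submatrix στ.1 στ.2
        = (A.submatrix στ.1 στ.2).map (fun x => x % ((p ^ m : ℕ) : ℤ)) := by
      rw [hBeq]; rfl
    rw [hsub, ← hN]
    exact dvd_det_sub' (p ^ m) (A.submatrix στ.1 στ.2)
  -- gcd congruence
  have h2 : (p : ℤ) ^ k ∣ detDiv B i ↔ (p : ℤ) ^ k ∣ detDiv A i := by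
    rcases le_or_gt k m with h | h
    · constructor
      · intro hgB
        apply Finset.dvd_gcd
        intro στ _
        have hmB : (p : ℤ) ^ k ∣ (B.submatrix στ.1 στ.2).det :=
          hgB.trans (Finset.gcd_dvd (Finset.mem_univ στ))
        have hd : (p : ℤ) ^ k ∣ (B.submatrix στ.1 στ.2).det - (A.submatrix στ.1 στ.2).det :=
          (pow_dvd_pow _ h).trans (key στ)
        have := dvd_sub hmB hd
        simpa using this
      · intro hgA
        apply Finset.dvd_gcd
        intro στ _
        have hmA : (p : ℤ) ^ k ∣ (A.submatrix στ.1 στ.2).det :=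
          hgA.trans (Finset.gcd_dvd (Finset.mem_univ στ))
        have hd : (p : ℤ) ^ k ∣ (B.submatrix στ.1 στ.2).det - (A.submatrix στ.1 στ.2).det :=
          (pow_dvd_pow _ h).trans (key στ)
        have := dvd_add hmA hd
        simpa using this
    · constructor
      · intro hgB
        exfalso
        apply hΔ
        have hmB : (p : ℤ) ^ m ∣ detDiv B i := (pow_dvd_pow _ h.le).trans hgB
        apply Finset.dvd_gcd
        intro στ _
        have hmb : (p : ℤ) ^ m ∣ (B.submatrix στ.1 στ.2).det :=
          hmB.trans (Finset.gcd_dvd (Finset.mem_univ στ))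
        have := dvd_sub hmb (key στ)
        simpa using this
      · intro hgA
        exact absurd ((pow_dvd_pow _ h.le).trans hgA) hΔ
  rw [h1, hchar i hi1 hiA k, ← h2]
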